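/- (Church) Let n ≥ 1 and let g : ℝⁿ → ℝⁿ be a map of class Cⁿ which is open and whose derivative has rank at least n − 1 at every point (i.e., rank(dg_p) ≥ n − 1 for all p ∈ ℝⁿ). Then g is a local homeomorphism: every point of ℝⁿ has an open neighborhood on which g restricts to a homeomorphism onto an open subset of ℝⁿ. -/

import Mathlib

open Set Module Metric
open scoped RealInnerProductSpace

private lemma church_aux_no_eq {f : ℝ → ℝ} {a b x₁ x₂ : ℝ}
    (hc : ContinuousOn f (Set.Ioo a b))
    (ho : ∀ J ⊆ Set.Ioo a b, IsOpen J → IsOpen (f '' J))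
    (h₁ : x₁ ∈ Set.Ioo a b) (h₂ : x₂ ∈ Set.Ioo a b) (hlt : x₁ < x₂)
    (hfe : f x₁ = f x₂) : False := by
  have hIcc : Set.Icc x₁ x₂ ⊆ Set.Ioo a b := fun t ht =>
    ⟨lt_of_lt_of_le h₁.1 ht.1, lt_of_le_of_lt ht.2 h₂.2⟩
  have hIoo : Set.Ioo x₁ x₂ ⊆ Set.Ioo a b := fun t ht => hIcc (Set.Ioo_subset_Icc_self ht)
  have hcI : ContinuousOn f (Set.Icc x₁ x₂) := hc.mono hIcc
  obtain ⟨c, hcmem, hcmax⟩ := (isCompact_Icc : IsCompact (Set.Icc x₁ x₂)).exists_isMaxOn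
    (Set.nonempty_Icc.mpr hlt.le) hcI
  obtain ⟨c', hc'mem, hc'min⟩ := (isCompact_Icc : IsCompact (Set.Icc x₁ x₂)).exists_isMinOn
    (Set.nonempty_Icc.mpr hlt.le) hcI
  have hopenI : IsOpen (f '' Set.Ioo x₁ x₂) := ho _ hIoo isOpen_Ioo
  have hx₁m : x₁ ∈ Set.Icc x₁ x₂ := Set.left_mem_Icc.mpr hlt.le
  have key : ∀ y ∈ f '' Set.Ioo x₁ x₂, (∀ t ∈ Set.Ioo x₁ x₂, f t ≤ y) → False := by
    intro y hy hub
    obtain ⟨ε, hε, hball⟩ := Metric.isOpen_iff.mp hopenI y hy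
    have : y + ε / 2 ∈ f '' Set.Ioo x₁ x₂ := by
      apply hball
      rw [Metric.mem_ball, Real.dist_eq, show y + ε / 2 - y = ε / 2 by ring,
        abs_of_nonneg (by positivity : (0:ℝ) ≤ ε / 2)]
      linarith
    obtain ⟨t, ht, hft⟩ := this
    have := hub t ht
    linarith
  have key' : ∀ y ∈ f '' Set.Ioo x₁ x₂, (∀ t ∈ Set.Ioo x₁ x₂, y ≤ f t) → False := by
    intro y hy hlb
    obtain ⟨ε, hε, hball⟩ := Metric.isOpen_iff.mp hopenI y hy
    have : y - ε / 2 ∈ f '' Set.Ioo x₁ x₂ := by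
      apply hball
      rw [Metric.mem_ball, Real.dist_eq, show y - ε / 2 - y = -(ε / 2) by ring, abs_neg,
        abs_of_nonneg (by positivity : (0:ℝ) ≤ ε / 2)]
      linarith
    obtain ⟨t, ht, hft⟩ := this
    have := hlb t ht
    linarith
  by_cases hmax : f x₁ < f c
  · have hc1 : c ≠ x₁ := fun h => by rw [h] at hmax; exact lt_irrefl _ hmax
    have hc2 : c ≠ x₂ := fun h => by rw [h, ← hfe] at hmax; exact lt_irrefl _ hmax
    have hcint : c ∈ Set.Ioo x₁ x₂ := ⟨lt_of_le_of_ne hcmem.1 (Ne.symm hc1),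
      lt_of_le_of_ne hcmem.2 hc2⟩
    exact key (f c) (Set.mem_image_of_mem f hcint)
      (fun t ht => hcmax (Set.Ioo_subset_Icc_self ht))
  · by_cases hmin : f c' < f x₁
    · have hc1 : c' ≠ x₁ := fun h => by rw [h] at hmin; exact lt_irrefl _ hmin
      have hc2 : c' ≠ x₂ := fun h => by rw [h, ← hfe] at hmin; exact lt_irrefl _ hmin
      have hcint : c' ∈ Set.Ioo x₁ x₂ := ⟨lt_of_le_of_ne hc'mem.1 (Ne.symm hc1),
        lt_of_le_of_ne hc'mem.2 hc2⟩
      exact key' (f c') (Set.mem_image_of_mem f hcint)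
        (fun t ht => hc'min (Set.Ioo_subset_Icc_self ht))
    · push_neg at hmax hmin
      have hconst : ∀ t ∈ Set.Ioo x₁ x₂, f t ≤ f x₁ := fun t ht =>
        le_trans (hcmax (Set.Ioo_subset_Icc_self ht)) hmax
      have hmid : (x₁ + x₂) / 2 ∈ Set.Ioo x₁ x₂ := ⟨by linarith, by linarith⟩
      exact key (f ((x₁+x₂)/2))
        (Set.mem_image_of_mem f hmid)
        (fun t ht => le_trans (hconst t ht)
          (le_trans hmin (hc'min (Set.Ioo_subset_Icc_self hmid))))

private lemma church_injOn_of_open {f : ℝ → ℝ} {a b : ℝ}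
    (hc : ContinuousOn f (Set.Ioo a b))
    (ho : ∀ J ⊆ Set.Ioo a b, IsOpen J → IsOpen (f '' J)) :
    Set.InjOn f (Set.Ioo a b) := by
  intro x₁ h₁ x₂ h₂ hfe
  rcases lt_trichotomy x₁ x₂ with h | h | h
  · exact absurd hfe (fun hfe => church_aux_no_eq hc ho h₁ h₂ h hfe)
  · exact h
  · exact absurd hfe.symm (fun hfe => church_aux_no_eq hc ho h₂ h₁ h hfe)

private lemma church_assemble {X Y : Type*} [TopologicalSpace X] [TopologicalSpace Y] {f : X → Y}
    (hc : Continuous f) (ho : IsOpenMap f)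
    (h : ∀ x, ∃ U, IsOpen U ∧ x ∈ U ∧ Set.InjOn f U) : IsLocalHomeomorph f := by
  rw [isLocalHomeomorph_iff_isOpenEmbedding_restrict]
  intro x
  obtain ⟨U, hUo, hxU, hinj⟩ := h x
  refine ⟨U, hUo.mem_nhds hxU, ?_⟩
  exact Topology.IsOpenEmbedding.of_continuous_injective_isOpenMap
    (hc.comp continuous_subtype_val) (Set.injOn_iff_injective.mp hinj) (ho.restrict hUo)

/-- Inverse function theorem packaged: a map with injective strict derivative into a space
of the same finite dimension restricts to a `PartialHomeomorph` near the point. -/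
private lemma church_inj_aux {E F' : Type*} [NormedAddCommGroup E] [NormedSpace ℝ E]
    [NormedAddCommGroup F'] [NormedSpace ℝ F'] [FiniteDimensional ℝ E] [FiniteDimensional ℝ F']
    {f : E → F'} {T : E →L[ℝ] F'} {p : E} (hf : HasStrictFDerivAt f T p)
    (hinj : Function.Injective T) (hdim : finrank ℝ E = finrank ℝ F') :
    ∃ φ : OpenPartialHomeomorph E F', ⇑φ = f ∧ p ∈ φ.source := by
  haveI : CompleteSpace E := FiniteDimensional.complete ℝ E
  let e : E ≃L[ℝ] F' :=
    ((T : E →ₗ[ℝ] F').linearEquivOfInjective hinj hdim).toContinuousLinearEquiv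
  have he : (e : E →L[ℝ] F') = T := by
    ext x
    simp [e, LinearMap.linearEquivOfInjective_apply]
  have hf' : HasStrictFDerivAt f (e : E →L[ℝ] F') p := by rw [he]; exact hf
  exact ⟨hf'.toOpenPartialHomeomorph f, rfl, hf'.mem_toOpenPartialHomeomorph_source⟩

set_option maxHeartbeats 1000000 in
private lemma church_main {E : Type*} [NormedAddCommGroup E] [InnerProductSpace ℝ E]
    [FiniteDimensional ℝ E] {n : ℕ} (hn : 1 ≤ n) (hfrE : finrank ℝ E = n)
    (g : E → E) (hg : ContDiff ℝ n g) (hopen : IsOpenMap g)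
    (hrank : ∀ p, n - 1 ≤ Module.finrank ℝ (LinearMap.range (fderiv ℝ g p).toLinearMap)) :
    IsLocalHomeomorph g := by
  apply church_assemble hg.continuous hopen
  intro p
  have hgp : HasStrictFDerivAt g (fderiv ℝ g p) p :=
    hg.contDiffAt.hasStrictFDerivAt (by exact_mod_cast Nat.one_le_iff_ne_zero.mp hn)
  set A : E →L[ℝ] E := fderiv ℝ g p with hA
  have hrange_ker : finrank ℝ (LinearMap.range A.toLinearMap) + finrank ℝ (LinearMap.ker A.toLinearMap) = n := by
    have := LinearMap.finrank_range_add_finrank_ker (A : E →ₗ[ℝ] E)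
    rw [hfrE] at this
    exact this
  have hle : finrank ℝ (LinearMap.range A.toLinearMap) ≤ n := hfrE ▸ Submodule.finrank_le _
  by_cases hcase : finrank ℝ (LinearMap.range A.toLinearMap) = n
  · -- full rank: inverse function theorem directly
    have hrange_top : LinearMap.range A.toLinearMap = ⊤ :=
      Submodule.eq_top_of_finrank_eq (by rw [hcase, hfrE])
    have hsurj : Function.Surjective A := LinearMap.range_eq_top.mp hrange_top
    have hinj : Function.Injective A :=
      (LinearMap.injective_iff_surjective (f := (A : E →ₗ[ℝ] E))).mpr hsurj
    obtain ⟨φ, hφcoe, hpsrc⟩ := church_inj_aux hgp hinj rfl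
    exact ⟨φ.source, φ.open_source, hpsrc, hφcoe ▸ φ.injOn⟩
  · -- rank n - 1
    have hVfr : finrank ℝ (LinearMap.range A.toLinearMap) = n - 1 := le_antisymm (by omega) (hrank p)
    set V : Submodule ℝ E := LinearMap.range A.toLinearMap with hV
    -- a unit normal w to V
    have hV_ne_top : V ≠ ⊤ := fun h => hcase (by rw [h, finrank_top, hfrE])
    have hVo_ne_bot : Vᗮ ≠ ⊥ := by
      rw [Ne, Submodule.orthogonal_eq_bot_iff]
      exact hV_ne_top
    obtain ⟨w₀, hw₀V, hw₀⟩ := Submodule.exists_mem_ne_zero_of_ne_bot hVo_ne_bot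
    set w : E := ‖w₀‖⁻¹ • w₀ with hw
    have hw_unit : ‖w‖ = 1 := norm_smul_inv_norm hw₀
    have hwV : w ∈ Vᗮ := Vᗮ.smul_mem _ hw₀V
    have hww : ⟪w, w⟫ = 1 := by
      rw [real_inner_self_eq_norm_sq, hw_unit]; norm_num
    have hwVorth : ∀ z ∈ V, ⟪w, z⟫ = 0 := fun z hz =>
      Submodule.mem_orthogonal' V w |>.mp hwV z hz
    -- Vᗮ is spanned by w
    have hVo_fr : finrank ℝ Vᗮ = 1 := by
      have := Submodule.finrank_add_finrank_orthogonal (K := V)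
      rw [hVfr, hfrE] at this
      omega
    have hwne : w ≠ 0 := fun h => by rw [h, norm_zero] at hw_unit; norm_num at hw_unit
    have hspan : (ℝ ∙ w) = Vᗮ :=
      Submodule.eq_of_le_of_finrank_eq
        ((Submodule.span_singleton_le_iff_mem _ _).mpr hwV)
        (by rw [finrank_span_singleton hwne, hVo_fr])
    -- decomposition of any vector
    have hdec : ∀ z : E, ((V.orthogonalProjectionOnto z : E) + ⟪w, z⟫ • w = z) := by
      intro z
      have hz : z - V.orthogonalProjectionOnto z ∈ Vᗮ :=
        V.sub_starProjection_mem_orthogonal z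
      rw [← hspan] at hz
      obtain ⟨c, hc⟩ := Submodule.mem_span_singleton.mp hz
      have hcz : ⟪w, z⟫ = c := by
        have : z = (V.orthogonalProjectionOnto z : E) + c • w := by
          rw [hc]; abel
        rw [this, inner_add_right, inner_smul_right,
          hwVorth _ (V.orthogonalProjectionOnto z).2, hww]
        ring
      rw [hcz, hc]
      abel
    -- kernel of A is spanned by u
    have hK_fr : finrank ℝ (LinearMap.ker A.toLinearMap) = 1 := by omega
    obtain ⟨u, huK, hune⟩ := Submodule.exists_mem_ne_zero_of_ne_bot
      (fun h => by rw [h, finrank_bot] at hK_fr; omega : LinearMap.ker A.toLinearMap ≠ ⊥)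
    have hKspan : (ℝ ∙ u) = LinearMap.ker A.toLinearMap :=
      Submodule.eq_of_le_of_finrank_eq
        ((Submodule.span_singleton_le_iff_mem _ _).mpr huK)
        (by rw [finrank_span_singleton hune, hK_fr])
    have huu : (0:ℝ) < ⟪u, u⟫ := by
      rw [real_inner_self_eq_norm_sq]
      have : ‖u‖ ≠ 0 := norm_ne_zero_iff.mpr hune
      positivity
    -- the auxiliary map F and its derivative T
    haveI : CompleteSpace V := FiniteDimensional.complete ℝ V
    set P : E →L[ℝ] V := V.orthogonalProjectionOnto with hP
    set T : E →L[ℝ] V × ℝ := (P.comp A).prod (innerSL ℝ u) with hT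
    have hTinj : Function.Injective T := by
      intro x y hxy
      have hv0 : T (x - y) = 0 := by rw [map_sub, hxy, sub_self]
      set v := x - y with hv
      have h1 : P (A v) = 0 := congrArg Prod.fst hv0
      have h2 : ⟪u, v⟫ = 0 := congrArg Prod.snd hv0
      have hAv : A v = 0 := by
        have hd := hdec (A v)
        rw [show V.orthogonalProjectionOnto (A v) = P (A v) from rfl, h1,
          hwVorth (A v) (LinearMap.mem_range_self _ v)] at hd
        simpa using hd.symm
      have hvK : v ∈ LinearMap.ker A.toLinearMap := LinearMap.mem_ker.mpr hAv
      rw [← hKspan] at hvK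
      obtain ⟨c, hc⟩ := Submodule.mem_span_singleton.mp hvK
      have : c = 0 := by
        have : ⟪u, v⟫ = c * ⟪u, u⟫ := by rw [← hc, inner_smul_right]
        rw [h2] at this
        have := this.symm
        nlinarith
      have hv0' : v = 0 := by rw [← hc, this, zero_smul]
      exact sub_eq_zero.mp hv0'
    have hdim : finrank ℝ E = finrank ℝ (V × ℝ) := by
      rw [Module.finrank_prod, hVfr, finrank_self, hfrE]
      omega
    set F : E → V × ℝ := fun x => (P (g x), (innerSL ℝ u) x) with hF
    have hFs : HasStrictFDerivAt F T p :=
      (P.hasStrictFDerivAt.comp p hgp).prodMk (innerSL ℝ u).hasStrictFDerivAt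
    obtain ⟨φ, hφcoe, hpsrc⟩ := church_inj_aux hFs hTinj hdim
    -- a product box around φ p inside the target
    obtain ⟨ε, hε, hball⟩ := Metric.isOpen_iff.mp φ.open_target (φ p) (φ.map_source hpsrc)
    set B : Set V := Metric.ball (φ p).1 ε with hB
    set J : Set ℝ := Metric.ball (φ p).2 ε with hJ
    have hBJ : B ×ˢ J ⊆ φ.target := by
      rw [hB, hJ, ball_prod_same]
      exact hball
    have hJIoo : J = Set.Ioo ((φ p).2 - ε) ((φ p).2 + ε) := Real.ball_eq_Ioo _ _
    refine ⟨φ.source ∩ φ ⁻¹' (B ×ˢ J),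
      φ.isOpen_inter_preimage (IsOpen.prod Metric.isOpen_ball Metric.isOpen_ball),
      ⟨hpsrc, ⟨Metric.mem_ball_self hε, Metric.mem_ball_self hε⟩⟩, ?_⟩
    -- injectivity on this set
    rintro x ⟨hxs, hxBJ⟩ x' ⟨hx's, hx'BJ⟩ hgeq
    have hFx : φ x = F x := congrFun hφcoe x
    have hFx' : φ x' = F x' := congrFun hφcoe x'
    have hv1 : (φ x).1 = (φ x').1 := by
      rw [hFx, hFx']
      show P (g x) = P (g x')
      rw [hgeq]
    set v : V := (φ x).1 with hvdef
    have hvB : v ∈ B := hxBJ.1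
    set t : ℝ := (φ x).2 with htdef
    set t' : ℝ := (φ x').2 with ht'def
    have htJ : t ∈ J := hxBJ.2
    have ht'J : t' ∈ J := hx'BJ.2
    set h : ℝ → ℝ := fun s => ⟪w, g (φ.symm (v, s))⟫ with hh
    have hvt : ((v, t) : V × ℝ) = φ x := rfl
    have hvt' : ((v, t') : V × ℝ) = φ x' := Prod.ext hv1 rfl
    -- continuity of the slice
    have hmapsto : ∀ s ∈ J, ((v, s) : V × ℝ) ∈ φ.target := fun s hs => hBJ ⟨hvB, hs⟩
    have hcont : ContinuousOn h J := by
      have c0 : Continuous fun s : ℝ => ((v, s) : V × ℝ) :=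
        (continuous_const.prodMk continuous_id)
      have c1 : ContinuousOn (fun s : ℝ => φ.symm (v, s)) J :=
        φ.continuousOn_symm.comp c0.continuousOn hmapsto
      have c2 : Continuous fun z : E => ⟪w, z⟫ := continuous_const.inner continuous_id
      exact (c2.comp hg.continuous).comp_continuousOn c1
    -- openness of slice images
    have hoslice : ∀ J' ⊆ J, IsOpen J' → IsOpen (h '' J') := by
      intro J' hJ'sub hJ'o
      have him : h '' J' = (fun s : ℝ => (v : E) + s • w) ⁻¹'
          (g '' (φ.source ∩ φ ⁻¹' (B ×ˢ J'))) := by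
        ext s
        constructor
        · rintro ⟨r, hr, rfl⟩
          have hvr : ((v, r) : V × ℝ) ∈ φ.target := hmapsto r (hJ'sub hr)
          set z := φ.symm (v, r) with hz_def
          have hz : φ z = (v, r) := φ.right_inv hvr
          have hzsrc : z ∈ φ.source := φ.map_target hvr
          have h1 : (V.orthogonalProjectionOnto (g z) : E) = (v : E) := by
            have hzF : φ z = F z := congrFun hφcoe z
            rw [hzF] at hz
            exact congrArg (fun q : V => (q : E)) (congrArg Prod.fst hz)
          refine ⟨z, ⟨hzsrc, ?_⟩, ?_⟩
          · show φ z ∈ B ×ˢ J'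
            rw [hz]
            exact ⟨hvB, hr⟩
          · have hd := hdec (g z)
            rw [h1] at hd
            show g z = (v : E) + (⟪w, g z⟫) • w
            exact hd.symm
        · rintro ⟨z, ⟨hzsrc, hzBJ'⟩, hgz⟩
          replace hgz : g z = (v : E) + s • w := hgz
          have hzF : φ z = F z := congrFun hφcoe z
          have h1 : P (g z) = v := by
            rw [hgz, map_add, map_smul]
            have hPv : P (v : E) = v := Submodule.orthogonalProjectionOnto_mem_subspace_eq_self v
            have hPw : P w = 0 :=
              Submodule.orthogonalProjectionOnto_apply_of_mem_orthogonal hwV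
            rw [hPv, hPw, smul_zero, add_zero]
          have hfst : (φ z).1 = v := by rw [hzF]; exact h1
          have hrJ' : (φ z).2 ∈ J' := hzBJ'.2
          refine ⟨(φ z).2, hrJ', ?_⟩
          show ⟪w, g (φ.symm (v, (φ z).2))⟫ = s
          have : ((v, (φ z).2) : V × ℝ) = φ z := Prod.ext hfst.symm rfl
          rw [this, φ.left_inv hzsrc, hgz, inner_add_right, inner_smul_right,
            hwVorth _ v.2, hww]
          ring
      rw [him]
      have hco : Continuous fun s : ℝ => (v : E) + s • w :=
        continuous_const.add (continuous_id.smul continuous_const)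
      exact (hopen _ (φ.isOpen_inter_preimage (IsOpen.prod Metric.isOpen_ball hJ'o))).preimage hco
    -- conclude using 1D injectivity
    have hinjJ : Set.InjOn h J := by
      rw [hJIoo] at hcont hoslice ⊢
      exact church_injOn_of_open hcont hoslice
    have hht : h t = ⟪w, g x⟫ := by
      show ⟪w, g (φ.symm (v, t))⟫ = ⟪w, g x⟫
      rw [hvt, φ.left_inv hxs]
    have hht' : h t' = ⟪w, g x'⟫ := by
      show ⟪w, g (φ.symm (v, t'))⟫ = ⟪w, g x'⟫
      rw [hvt', φ.left_inv hx's]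
    have htt' : t = t' := hinjJ htJ ht'J (by rw [hht, hht', hgeq])
    have : φ x = φ x' := by rw [← hvt, ← hvt', htt']
    exact φ.injOn hxs hx's this

/-- **Theorem (Church, 1.4).** If `g : ℝⁿ → ℝⁿ` is `Cⁿ` and open with rank
at least `n - 1` at every point, then `g` is a local homeomorphism. -/
theorem church_rank_ge_sub_one_local_homeomorph
    {n : ℕ} (hn : 1 ≤ n)
    (g : EuclideanSpace ℝ (Fin n) → EuclideanSpace ℝ (Fin n))
    (hg : ContDiff ℝ n g) (hopen : IsOpenMap g)
    (hrank : ∀ p, n - 1 ≤ Module.finrank ℝ (LinearMap.range (fderiv ℝ g p).toLinearMap)) :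
    IsLocalHomeomorph g :=
  church_main hn finrank_euclideanSpace_fin g hg hopen hrank
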